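/- Let A ∈ ℝ^{m×n} have singular value decomposition A = UΣVᵀ and let τ ≥ 0. Then the singular value thresholding operator D_τ(A) = U max(Σ − τI, 0) Vᵀ is the unique minimizer of X ↦ τ‖X‖_* + (1/2)‖X − A‖_F² over ℝ^{m×n}. -/

import Mathlib

open Matrix

/-- The matrix nuclear norm: sum of singular values, i.e. the trace of `√(AᴴA)`. -/
noncomputable def nuclearNorm {m n : ℕ} (A : Matrix (Fin m) (Fin n) ℝ) : ℝ :=
  (((Matrix.posSemidef_conjTranspose_mul_self A).1.eigenvectorUnitary : Matrix (Fin n) (Fin n) ℝ) *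
    diagonal ((RCLike.ofReal : ℝ → ℝ) ∘
      (Real.sqrt ∘ (Matrix.posSemidef_conjTranspose_mul_self A).1.eigenvalues)) *
    (star (Matrix.posSemidef_conjTranspose_mul_self A).1.eigenvectorUnitary :
      Matrix (Fin n) (Fin n) ℝ)).trace

open scoped MatrixOrder

lemma psd_eq_sqrt_of_sq_eq {n : ℕ} {S P : Matrix (Fin n) (Fin n) ℝ} (hS : S.PosSemidef)
    (_hP : P.PosSemidef) (h : S ^ 2 = P) : S = CFC.sqrt P :=
  (CFC.sqrt_unique (by rw [← pow_two]; exact h) hS.nonneg).symm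

lemma nuclearNorm_eq_trace {m n : ℕ} (A : Matrix (Fin m) (Fin n) ℝ)
    {P : Matrix (Fin n) (Fin n) ℝ} (hP : P.PosSemidef) (h : P = Aᴴ * A) :
    nuclearNorm A = (CFC.sqrt P).trace := by
  subst h
  rw [CFC.sqrt_eq_real_sqrt _ hP.nonneg, cfcₙ_eq_cfc, hP.1.cfc_eq]
  rfl

lemma sum_sq_mulVec {n : ℕ} (V : Matrix (Fin n) (Fin n) ℝ) (hV : Vᵀ * V = 1)
    (w : Fin n → ℝ) : ∑ j, ((V *ᵥ w) j) ^ 2 = ∑ j, (w j) ^ 2 := by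
  have h1 : (V *ᵥ w) ⬝ᵥ (V *ᵥ w) = w ⬝ᵥ w := by
    rw [Matrix.dotProduct_mulVec, ← Matrix.vecMul_transpose, Matrix.vecMul_vecMul, hV,
      Matrix.vecMul_one]
  simpa [dotProduct, pow_two] using h1

lemma dot_le_tau_nuclear {m n : ℕ} (τ : ℝ) (hτ : 0 ≤ τ) (G X : Matrix (Fin m) (Fin n) ℝ)
    (hop : ∀ v : Fin m → ℝ, ∑ j, ((Gᵀ *ᵥ v) j) ^ 2 ≤ τ ^ 2 * ∑ i, (v i) ^ 2) :
    ∑ i, ∑ j, G i j * X i j ≤ τ * nuclearNorm X := by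
  classical
  have hH : (Xᴴ * X).PosSemidef := Matrix.posSemidef_conjTranspose_mul_self X
  set lam : Fin n → ℝ := hH.1.eigenvalues with hlam
  set Q : Matrix (Fin n) (Fin n) ℝ := (hH.1.eigenvectorUnitary : Matrix (Fin n) (Fin n) ℝ)
    with hQdef
  have hQ1 : star Q * Q = 1 := Unitary.coe_star_mul_self hH.1.eigenvectorUnitary
  have hQ2 : Q * star Q = 1 := Unitary.coe_mul_star_self hH.1.eigenvectorUnitary
  have hlam0 : ∀ k, 0 ≤ lam k := hH.eigenvalues_nonneg
  have hspec : star Q * (Xᴴ * X) * Q = Matrix.diagonal lam := by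
    have := hH.1.conjStarAlgAut_star_eigenvectorUnitary
    rw [hQdef, hlam]
    simpa [RCLike.ofReal_real_eq_id, Unitary.conjStarAlgAut_star_apply] using this
  -- nuclear norm is the sum of square roots of eigenvalues
  have hnuc : nuclearNorm X = ∑ k, Real.sqrt (lam k) := by
    have hdiagps : (Matrix.diagonal fun k => Real.sqrt (lam k)).PosSemidef :=
      Matrix.posSemidef_diagonal_iff.mpr fun k => Real.sqrt_nonneg _
    have hSps : (Q * Matrix.diagonal (fun k => Real.sqrt (lam k)) * star Q).PosSemidef := by
      have := hdiagps.mul_mul_conjTranspose_same Q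
      simpa [Matrix.star_eq_conjTranspose] using this
    have hsq : (Q * Matrix.diagonal (fun k => Real.sqrt (lam k)) * star Q) ^ 2 = Xᴴ * X := by
      have hspec' : Xᴴ * X = Q * Matrix.diagonal lam * star Q := by
        have := hH.1.spectral_theorem
        rw [hQdef, hlam]
        simpa [RCLike.ofReal_real_eq_id] using this
      rw [pow_two]
      calc Q * Matrix.diagonal (fun k => Real.sqrt (lam k)) * star Q *
            (Q * Matrix.diagonal (fun k => Real.sqrt (lam k)) * star Q)
          = Q * Matrix.diagonal (fun k => Real.sqrt (lam k)) * (star Q * Q) *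
            Matrix.diagonal (fun k => Real.sqrt (lam k)) * star Q := by
            simp only [Matrix.mul_assoc]
        _ = Q * (Matrix.diagonal (fun k => Real.sqrt (lam k)) *
            Matrix.diagonal (fun k => Real.sqrt (lam k))) * star Q := by
            rw [hQ1]; simp only [Matrix.mul_one, Matrix.mul_assoc]
        _ = Q * Matrix.diagonal lam * star Q := by
            rw [Matrix.diagonal_mul_diagonal]
            have he : (fun i => Real.sqrt (lam i) * Real.sqrt (lam i)) = lam :=
              funext fun i => Real.mul_self_sqrt (hlam0 i)
            rw [he]
        _ = Xᴴ * X := hspec'.symm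
    have := (psd_eq_sqrt_of_sq_eq hSps hH hsq).symm
    rw [nuclearNorm_eq_trace X hH rfl, this]
    rw [Matrix.trace_mul_cycle]
    rw [hQ1, Matrix.one_mul, Matrix.trace_diagonal]
  -- rewrite the sum as a trace
  have hsum : ∑ i, ∑ j, G i j * X i j = (star Q * (Gᵀ * X) * Q).trace := by
    rw [Matrix.trace_mul_cycle, ← Matrix.mul_assoc, hQ2, Matrix.one_mul]
    simp only [Matrix.trace, Matrix.diag_apply, Matrix.mul_apply, Matrix.transpose_apply]
    rw [Finset.sum_comm]
  rw [hsum, hnuc, Finset.mul_sum, Matrix.trace]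
  apply Finset.sum_le_sum
  intro k _
  set q : Fin n → ℝ := fun a => Q a k with hq
  set u : Fin m → ℝ := X *ᵥ q with hu
  have hCkk : (star Q * (Gᵀ * X) * Q).diag k = q ⬝ᵥ (Gᵀ *ᵥ u) := by
    simp only [Matrix.diag_apply, Matrix.mul_apply, Matrix.star_apply, star_trivial,
      Matrix.conjTranspose_apply, dotProduct, Matrix.mulVec, hu, hq, Finset.sum_mul,
      Finset.mul_sum]
    rw [Finset.sum_comm]
    refine Finset.sum_congr rfl fun a _ => ?_
    rw [Finset.sum_comm]
    refine Finset.sum_congr rfl fun b _ => ?_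
    exact Finset.sum_congr rfl fun c _ => by ring
  have hqnorm : ∑ a, (q a) ^ 2 = 1 := by
    have := congrArg (fun M => M k k) hQ1
    simpa [Matrix.mul_apply, Matrix.star_apply, star_trivial, hq, pow_two,
      Matrix.one_apply] using this
  have hunorm : ∑ i, (u i) ^ 2 = lam k := by
    have := congrArg (fun M => M k k) hspec
    simp only [Matrix.diagonal_apply_eq] at this
    rw [← this]
    simp only [Matrix.mul_apply, Matrix.conjTranspose_apply, star_trivial, hu, hq,
      Matrix.mulVec, dotProduct, pow_two, Finset.sum_mul, Finset.mul_sum,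
      Matrix.star_apply]
    rw [Finset.sum_comm]
    refine Finset.sum_congr rfl fun j _ => ?_
    rw [Finset.sum_comm]
    refine Finset.sum_congr rfl fun c _ => ?_
    refine Finset.sum_congr rfl fun a _ => ?_
    ring
  have hw := hop u
  have hcs := Finset.sum_mul_sq_le_sq_mul_sq Finset.univ q (Gᵀ *ᵥ u)
  have h1 : (q ⬝ᵥ (Gᵀ *ᵥ u)) ^ 2 ≤ τ ^ 2 * lam k := by
    calc (q ⬝ᵥ (Gᵀ *ᵥ u)) ^ 2 ≤ (∑ a, (q a) ^ 2) * ∑ j, ((Gᵀ *ᵥ u) j) ^ 2 := hcs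
      _ = ∑ j, ((Gᵀ *ᵥ u) j) ^ 2 := by rw [hqnorm, one_mul]
      _ ≤ τ ^ 2 * ∑ i, (u i) ^ 2 := hw
      _ = τ ^ 2 * lam k := by rw [hunorm]
  rw [hCkk]
  calc q ⬝ᵥ (Gᵀ *ᵥ u) ≤ |q ⬝ᵥ (Gᵀ *ᵥ u)| := le_abs_self _
    _ = Real.sqrt ((q ⬝ᵥ (Gᵀ *ᵥ u)) ^ 2) := (Real.sqrt_sq_eq_abs _).symm
    _ ≤ Real.sqrt (τ ^ 2 * lam k) := Real.sqrt_le_sqrt h1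
    _ = τ * Real.sqrt (lam k) := by
        rw [Real.sqrt_mul (sq_nonneg τ), Real.sqrt_sq hτ]

lemma real_conjTranspose {m n : ℕ} (M : Matrix (Fin m) (Fin n) ℝ) : Mᴴ = Mᵀ := by
  ext i j; simp [Matrix.conjTranspose_apply]

lemma sum_eq_trace {m n : ℕ} (P Q : Matrix (Fin m) (Fin n) ℝ) :
    ∑ i, ∑ j, P i j * Q i j = (Pᵀ * Q).trace := by
  simp only [Matrix.trace, Matrix.diag_apply, Matrix.mul_apply, Matrix.transpose_apply]
  rw [Finset.sum_comm]

lemma nuclearNorm_svd {m n : ℕ} (U : Matrix (Fin m) (Fin m) ℝ) (V : Matrix (Fin n) (Fin n) ℝ)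
    (T : Matrix (Fin m) (Fin n) ℝ) (hU : Uᵀ * U = 1) (hV : Vᵀ * V = 1)
    (hdiag : ∀ (i : Fin m) (j : Fin n), (i : ℕ) ≠ (j : ℕ) → T i j = 0) :
    nuclearNorm (U * T * Vᵀ) = ∑ j, Real.sqrt (∑ i, (T i j) ^ 2) := by
  classical
  set d : Fin n → ℝ := fun j => ∑ i, (T i j) ^ 2 with hd
  have hd0 : ∀ j, 0 ≤ d j := fun j => Finset.sum_nonneg fun i _ => sq_nonneg _
  have hTT : Tᵀ * T = Matrix.diagonal d := by
    ext j j'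
    simp only [Matrix.mul_apply, Matrix.transpose_apply, Matrix.diagonal_apply]
    by_cases h : j = j'
    · subst h; simp [hd, pow_two]
    · simp only [if_neg h]
      refine Finset.sum_eq_zero fun i _ => ?_
      rcases eq_or_ne (i : ℕ) (j : ℕ) with hi | hi
      · have : (i : ℕ) ≠ (j' : ℕ) := by
          intro hc; exact h (Fin.ext (hi.symm.trans hc))
        rw [hdiag i j' this, mul_zero]
      · rw [hdiag i j hi, zero_mul]
  have hP : ((U * T * Vᵀ)ᴴ * (U * T * Vᵀ)).PosSemidef :=
    Matrix.posSemidef_conjTranspose_mul_self _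
  have hPeq : (U * T * Vᵀ)ᴴ * (U * T * Vᵀ) = V * Matrix.diagonal d * Vᵀ := by
    rw [real_conjTranspose]
    calc (U * T * Vᵀ)ᵀ * (U * T * Vᵀ)
        = Vᵀᵀ * (Tᵀ * Uᵀ) * (U * T * Vᵀ) := by rw [Matrix.transpose_mul, Matrix.transpose_mul]
      _ = V * (Tᵀ * (Uᵀ * U) * T) * Vᵀ := by
          simp only [Matrix.transpose_transpose, Matrix.mul_assoc]
      _ = V * (Tᵀ * T) * Vᵀ := by rw [hU]; simp only [Matrix.mul_one, Matrix.mul_assoc]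
      _ = V * Matrix.diagonal d * Vᵀ := by rw [hTT]
  set S : Matrix (Fin n) (Fin n) ℝ := V * Matrix.diagonal (fun j => Real.sqrt (d j)) * Vᵀ
    with hS
  have hSps : S.PosSemidef := by
    have := (Matrix.posSemidef_diagonal_iff.mpr
      fun j => Real.sqrt_nonneg (d j)).mul_mul_conjTranspose_same V
    simpa [hS, real_conjTranspose] using this
  have hsq : S ^ 2 = (U * T * Vᵀ)ᴴ * (U * T * Vᵀ) := by
    rw [hPeq, pow_two, hS]
    calc V * Matrix.diagonal (fun j => Real.sqrt (d j)) * Vᵀ *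
          (V * Matrix.diagonal (fun j => Real.sqrt (d j)) * Vᵀ)
        = V * (Matrix.diagonal (fun j => Real.sqrt (d j)) * (Vᵀ * V) *
            Matrix.diagonal (fun j => Real.sqrt (d j))) * Vᵀ := by
          simp only [Matrix.mul_assoc]
      _ = V * Matrix.diagonal d * Vᵀ := by
          rw [hV]
          rw [Matrix.mul_one, Matrix.diagonal_mul_diagonal]
          have he : (fun j => Real.sqrt (d j) * Real.sqrt (d j)) = d :=
            funext fun j => Real.mul_self_sqrt (hd0 j)
          rw [he]
  have := (psd_eq_sqrt_of_sq_eq hSps hP hsq).symm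
  rw [nuclearNorm_eq_trace _ hP rfl, this, hS, Matrix.trace_mul_cycle, hV, Matrix.one_mul,
    Matrix.trace_diagonal]

lemma inner_svd {m n : ℕ} (U : Matrix (Fin m) (Fin m) ℝ) (V : Matrix (Fin n) (Fin n) ℝ)
    (M T : Matrix (Fin m) (Fin n) ℝ) (hU : Uᵀ * U = 1) (hV : Vᵀ * V = 1) :
    ∑ i, ∑ j, (U * M * Vᵀ) i j * (U * T * Vᵀ) i j = ∑ j, ∑ i, M i j * T i j := by
  rw [sum_eq_trace]
  have h1 : (U * M * Vᵀ)ᵀ * (U * T * Vᵀ) = V * (Mᵀ * T) * Vᵀ := by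
    calc (U * M * Vᵀ)ᵀ * (U * T * Vᵀ)
        = Vᵀᵀ * (Mᵀ * Uᵀ) * (U * T * Vᵀ) := by rw [Matrix.transpose_mul, Matrix.transpose_mul]
      _ = V * (Mᵀ * (Uᵀ * U) * T) * Vᵀ := by
          simp only [Matrix.transpose_transpose, Matrix.mul_assoc]
      _ = V * (Mᵀ * T) * Vᵀ := by rw [hU]; simp only [Matrix.mul_one, Matrix.mul_assoc]
  rw [h1, Matrix.trace_mul_cycle, hV, Matrix.one_mul]
  simp only [Matrix.trace, Matrix.diag_apply, Matrix.mul_apply, Matrix.transpose_apply]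

lemma mt_bound {m n : ℕ} (τ : ℝ) (hτ : 0 ≤ τ) (M : Matrix (Fin m) (Fin n) ℝ)
    (hdiag : ∀ (i : Fin m) (j : Fin n), (i : ℕ) ≠ (j : ℕ) → M i j = 0)
    (h0 : ∀ (i : Fin m) (j : Fin n), 0 ≤ M i j) (h1 : ∀ (i : Fin m) (j : Fin n), M i j ≤ τ)
    (w : Fin m → ℝ) :
    ∑ j, ((Mᵀ *ᵥ w) j) ^ 2 ≤ τ ^ 2 * ∑ i, (w i) ^ 2 := by
  classical
  have hmem : ∀ (k : Type) [Fintype k] (x : k), x ∈ (Finset.univ : Finset k) :=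
    fun k _ x => Finset.mem_univ x
  have key : ∀ j : Fin n, ((Mᵀ *ᵥ w) j) ^ 2 ≤
      ∑ i : Fin m, (if (i : ℕ) = (j : ℕ) then τ ^ 2 * (w i) ^ 2 else 0) := by
    intro j
    have hmv : (Mᵀ *ᵥ w) j = ∑ i : Fin m, M i j * w i := by
      simp [Matrix.mulVec, dotProduct, Matrix.transpose_apply]
    by_cases hj : (j : ℕ) < m
    · set i₀ : Fin m := ⟨(j : ℕ), hj⟩ with hi₀
      have hL : (Mᵀ *ᵥ w) j = M i₀ j * w i₀ := by
        rw [hmv]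
        refine Finset.sum_eq_single i₀ (fun i _ hne => ?_)
          (fun h => absurd (Finset.mem_univ _) h)
        have : (i : ℕ) ≠ (j : ℕ) := fun hc => hne (Fin.ext hc)
        rw [hdiag i j this, zero_mul]
      have hR : (∑ i : Fin m, if (i : ℕ) = (j : ℕ) then τ ^ 2 * (w i) ^ 2 else 0)
          = τ ^ 2 * (w i₀) ^ 2 := by
        rw [Finset.sum_eq_single i₀ (fun i _ hne => ?_)
          (fun h => absurd (Finset.mem_univ _) h)]
        · rw [if_pos rfl]
        · have : (i : ℕ) ≠ (j : ℕ) := fun hc => hne (Fin.ext hc)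
          rw [if_neg this]
      rw [hL, hR]
      have ha := h0 i₀ j
      have hb := h1 i₀ j
      nlinarith [sq_nonneg (w i₀), mul_le_mul hb hb ha hτ]
    · have hL : (Mᵀ *ᵥ w) j = 0 := by
        rw [hmv]
        refine Finset.sum_eq_zero fun i _ => ?_
        have : (i : ℕ) ≠ (j : ℕ) := by omega
        rw [hdiag i j this, zero_mul]
      rw [hL]
      refine le_trans (by norm_num) (Finset.sum_nonneg fun i _ => ?_)
      positivity
  have step1 : ∑ j, ((Mᵀ *ᵥ w) j) ^ 2 ≤
      ∑ j : Fin n, ∑ i : Fin m, (if (i : ℕ) = (j : ℕ) then τ ^ 2 * (w i) ^ 2 else 0) :=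
    Finset.sum_le_sum fun j _ => key j
  have step2 : (∑ j : Fin n, ∑ i : Fin m,
        (if (i : ℕ) = (j : ℕ) then τ ^ 2 * (w i) ^ 2 else 0)) =
      ∑ i : Fin m, ∑ j : Fin n, (if (i : ℕ) = (j : ℕ) then τ ^ 2 * (w i) ^ 2 else 0) :=
    Finset.sum_comm
  have step3 : (∑ i : Fin m, ∑ j : Fin n,
        (if (i : ℕ) = (j : ℕ) then τ ^ 2 * (w i) ^ 2 else 0)) ≤
      ∑ i : Fin m, τ ^ 2 * (w i) ^ 2 := by
    refine Finset.sum_le_sum fun i _ => ?_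
    by_cases hi : (i : ℕ) < n
    · set j₀ : Fin n := ⟨(i : ℕ), hi⟩ with hj₀
      have : (∑ j : Fin n, if (i : ℕ) = (j : ℕ) then τ ^ 2 * (w i) ^ 2 else 0)
          = τ ^ 2 * (w i) ^ 2 := by
        rw [Finset.sum_eq_single j₀ (fun j _ hne => ?_)
          (fun h => absurd (Finset.mem_univ _) h)]
        · rw [if_pos rfl]
        · have : (i : ℕ) ≠ (j : ℕ) := fun hc => hne (Fin.ext hc.symm)
          rw [if_neg this]
      rw [this]
    · have : (∑ j : Fin n, if (i : ℕ) = (j : ℕ) then τ ^ 2 * (w i) ^ 2 else 0) = 0 := by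
        refine Finset.sum_eq_zero fun j _ => ?_
        have : (i : ℕ) ≠ (j : ℕ) := by omega
        rw [if_neg this]
      rw [this]; positivity
  calc ∑ j, ((Mᵀ *ᵥ w) j) ^ 2 ≤ _ := step1
    _ = _ := step2
    _ ≤ ∑ i : Fin m, τ ^ 2 * (w i) ^ 2 := step3
    _ = τ ^ 2 * ∑ i, (w i) ^ 2 := by rw [Finset.mul_sum]

/-- Let `A = UΣVᵀ` be a singular value decomposition (`U`, `V` orthogonal, `Σ`
nonnegative and supported on the diagonal) and `τ ≥ 0`. Then the singular value
thresholding operator `D_τ(A) = U max(Σ − τI, 0) Vᵀ` is the unique minimizer of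
`X ↦ τ‖X‖_* + (1/2)‖X − A‖_F²`. -/
theorem singular_value_thresholding_unique_minimizer {m n : ℕ}
    (A : Matrix (Fin m) (Fin n) ℝ) (τ : ℝ) (hτ : 0 ≤ τ)
    (U : Matrix (Fin m) (Fin m) ℝ) (V : Matrix (Fin n) (Fin n) ℝ)
    (Sig : Matrix (Fin m) (Fin n) ℝ)
    (hU : Uᵀ * U = 1) (hV : Vᵀ * V = 1)
    (hSigdiag : ∀ (i : Fin m) (j : Fin n), (i : ℕ) ≠ (j : ℕ) → Sig i j = 0)
    (hSignn : ∀ i j, 0 ≤ Sig i j)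
    (hA : A = U * Sig * Vᵀ)
    (D : Matrix (Fin m) (Fin n) ℝ)
    (hD : D = U * (Matrix.of fun i j =>
        max (Sig i j - (if (i : ℕ) = (j : ℕ) then τ else 0)) 0) * Vᵀ) :
    (∀ X : Matrix (Fin m) (Fin n) ℝ,
        τ * nuclearNorm D + (1 / 2) * ∑ i, ∑ j, (D i j - A i j) ^ 2 ≤
          τ * nuclearNorm X + (1 / 2) * ∑ i, ∑ j, (X i j - A i j) ^ 2) ∧
      (∀ X : Matrix (Fin m) (Fin n) ℝ,
        τ * nuclearNorm X + (1 / 2) * ∑ i, ∑ j, (X i j - A i j) ^ 2 ≤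
            τ * nuclearNorm D + (1 / 2) * ∑ i, ∑ j, (D i j - A i j) ^ 2 →
          X = D) := by
  classical
  set T : Matrix (Fin m) (Fin n) ℝ := Matrix.of fun i j =>
      max (Sig i j - (if (i : ℕ) = (j : ℕ) then τ else 0)) 0 with hT
  set M : Matrix (Fin m) (Fin n) ℝ := Sig - T with hM
  have hTapp : ∀ (i : Fin m) (j : Fin n),
      T i j = max (Sig i j - (if (i : ℕ) = (j : ℕ) then τ else 0)) 0 := fun i j => rfl
  have hT0 : ∀ (i : Fin m) (j : Fin n), 0 ≤ T i j := fun i j => le_max_right _ _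
  have hTdiagz : ∀ (i : Fin m) (j : Fin n), (i : ℕ) ≠ (j : ℕ) → T i j = 0 := by
    intro i j h
    rw [hTapp, hSigdiag i j h, if_neg h]
    simp
  have hMapp : ∀ (i : Fin m) (j : Fin n), M i j = Sig i j - T i j := fun i j => rfl
  have hMdiag : ∀ (i : Fin m) (j : Fin n), (i : ℕ) ≠ (j : ℕ) → M i j = 0 := by
    intro i j h
    rw [hMapp, hTdiagz i j h, hSigdiag i j h, sub_zero]
  have hM0 : ∀ (i : Fin m) (j : Fin n), 0 ≤ M i j := by
    intro i j
    rcases eq_or_ne (i : ℕ) (j : ℕ) with h | h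
    · rw [hMapp, hTapp, if_pos h]
      have := hSignn i j
      rcases le_total (Sig i j) τ with h' | h'
      · rw [max_eq_right (by linarith)]; linarith
      · rw [max_eq_left (by linarith)]; linarith
    · rw [hMdiag i j h]
  have hM1 : ∀ (i : Fin m) (j : Fin n), M i j ≤ τ := by
    intro i j
    rcases eq_or_ne (i : ℕ) (j : ℕ) with h | h
    · rw [hMapp, hTapp, if_pos h]
      have := hSignn i j
      rcases le_total (Sig i j) τ with h' | h'
      · rw [max_eq_right (by linarith)]; linarith
      · rw [max_eq_left (by linarith)]; linarith
    · rw [hMdiag i j h]; exact hτ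
  have hUUt : U * Uᵀ = 1 := mul_eq_one_comm.mp hU
  have hAD : A - D = U * M * Vᵀ := by
    rw [hA, hD, hM, Matrix.mul_sub, Matrix.sub_mul]
  have hopG : ∀ v : Fin m → ℝ,
      ∑ j, (((U * M * Vᵀ)ᵀ *ᵥ v) j) ^ 2 ≤ τ ^ 2 * ∑ i, (v i) ^ 2 := by
    intro v
    have ht : (U * M * Vᵀ)ᵀ = V * (Mᵀ * Uᵀ) := by
      rw [Matrix.transpose_mul, Matrix.transpose_mul, Matrix.transpose_transpose]
    rw [ht, ← Matrix.mulVec_mulVec, sum_sq_mulVec V hV, ← Matrix.mulVec_mulVec]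
    calc ∑ j, ((Mᵀ *ᵥ (Uᵀ *ᵥ v)) j) ^ 2
        ≤ τ ^ 2 * ∑ i, ((Uᵀ *ᵥ v) i) ^ 2 := mt_bound τ hτ M hMdiag hM0 hM1 _
      _ = τ ^ 2 * ∑ i, (v i) ^ 2 := by
          rw [sum_sq_mulVec Uᵀ (by rw [Matrix.transpose_transpose]; exact hUUt) v]
  have core : ∀ X : Matrix (Fin m) (Fin n) ℝ,
      ∑ i, ∑ j, (A - D) i j * X i j ≤ τ * nuclearNorm X := by
    intro X
    rw [hAD]
    exact dot_le_tau_nuclear τ hτ _ X hopG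
  have nucD : nuclearNorm D = ∑ j, Real.sqrt (∑ i, (T i j) ^ 2) := by
    rw [hD]
    exact nuclearNorm_svd U V T hU hV hTdiagz
  have gD : ∑ i, ∑ j, (A - D) i j * D i j = τ * nuclearNorm D := by
    rw [hAD, nucD, hD, inner_svd U V M T hU hV, Finset.mul_sum]
    refine Finset.sum_congr rfl fun j _ => ?_
    by_cases hj : (j : ℕ) < m
    · set i₀ : Fin m := ⟨(j : ℕ), hj⟩ with hi₀
      have hL : ∑ i, M i j * T i j = M i₀ j * T i₀ j := by
        refine Finset.sum_eq_single i₀ (fun i _ hne => ?_)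
          (fun h => absurd (Finset.mem_univ _) h)
        have : (i : ℕ) ≠ (j : ℕ) := fun hc => hne (Fin.ext hc)
        rw [hMdiag i j this, zero_mul]
      have hin : ∑ i, (T i j) ^ 2 = (T i₀ j) ^ 2 := by
        refine Finset.sum_eq_single i₀ (fun i _ hne => ?_)
          (fun h => absurd (Finset.mem_univ _) h)
        have : (i : ℕ) ≠ (j : ℕ) := fun hc => hne (Fin.ext hc)
        rw [hTdiagz i j this]; ring
      rw [hL, hin, Real.sqrt_sq (hT0 i₀ j)]
      have hcond : (i₀ : ℕ) = (j : ℕ) := rfl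
      rw [hMapp, hTapp, if_pos hcond]
      rcases le_total (Sig i₀ j) τ with h' | h'
      · rw [max_eq_right (by linarith)]; ring
      · rw [max_eq_left (by linarith)]; ring
    · have hL : ∑ i, M i j * T i j = 0 := by
        refine Finset.sum_eq_zero fun i _ => ?_
        have : (i : ℕ) ≠ (j : ℕ) := by omega
        rw [hTdiagz i j this, mul_zero]
      have hin : ∑ i, (T i j) ^ 2 = 0 := by
        refine Finset.sum_eq_zero fun i _ => ?_
        have : (i : ℕ) ≠ (j : ℕ) := by omega
        rw [hTdiagz i j this]; ring
      rw [hL, hin, Real.sqrt_zero, mul_zero]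
  have master : ∀ X : Matrix (Fin m) (Fin n) ℝ,
      τ * nuclearNorm D + (1 / 2) * ∑ i, ∑ j, (D i j - A i j) ^ 2 +
        (1 / 2) * ∑ i, ∑ j, (X i j - D i j) ^ 2 ≤
      τ * nuclearNorm X + (1 / 2) * ∑ i, ∑ j, (X i j - A i j) ^ 2 := by
    intro X
    have hcore := core X
    have hident : ∑ i, ∑ j, (X i j - A i j) ^ 2 =
        ∑ i, ∑ j, ((X i j - D i j) ^ 2 + (D i j - A i j) ^ 2
          - 2 * ((A - D) i j * X i j) + 2 * ((A - D) i j * D i j)) := by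
      refine Finset.sum_congr rfl fun i _ => Finset.sum_congr rfl fun j _ => ?_
      simp only [Matrix.sub_apply]
      ring
    simp only [Finset.sum_add_distrib, Finset.sum_sub_distrib, ← Finset.mul_sum] at hident
    linarith [gD, hcore]
  constructor
  · intro X
    have h := master X
    have h0 : 0 ≤ (1 / 2 : ℝ) * ∑ i, ∑ j, (X i j - D i j) ^ 2 := by positivity
    linarith
  · intro X hX
    have h := master X
    have h2 : ∑ i, ∑ j, (X i j - D i j) ^ 2 ≤ 0 := by linarith
    have h3 : ∑ i, ∑ j, (X i j - D i j) ^ 2 = 0 :=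
      le_antisymm h2 (by positivity)
    ext i j
    have h4 : ∑ j, (X i j - D i j) ^ 2 = 0 :=
      (Finset.sum_eq_zero_iff_of_nonneg fun i _ =>
        Finset.sum_nonneg fun j _ => sq_nonneg _).mp h3 i (Finset.mem_univ i)
    have h5 : (X i j - D i j) ^ 2 = 0 :=
      (Finset.sum_eq_zero_iff_of_nonneg fun j _ => sq_nonneg _).mp h4 j (Finset.mem_univ j)
    have h6 : X i j - D i j = 0 := by
      nlinarith [sq_nonneg (X i j - D i j)]
    linarith
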